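/- In the Artin-Schreier tower over F_p, for every i ≥ 0 one has c_i^(N_i) = a_{i-1}, where N_i = (p^(p^(i+1)) - 1)/(p^(p^i) - 1). -/

import Mathlib

open Finset Polynomial

noncomputable def phi (p : ℕ) [Fact p.Prime] : ZMod p →+* AlgebraicClosure (ZMod p) :=
  algebraMap _ _

lemma prod_poly (p : ℕ) [Fact p.Prime] :
    ∏ w : ZMod p, (X + C (phi p w)) = (X ^ p - X : (AlgebraicClosure (ZMod p))[X]) := by
  have hp1 : 1 < p := (Fact.out : p.Prime).one_lt
  have hmonic : (X ^ p - X : (ZMod p)[X]).Monic :=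
    monic_X_pow_sub (by rw [degree_X]; exact_mod_cast hp1)
  have hroots : (X ^ p - X : (ZMod p)[X]).roots = Finset.univ.val := by
    have := FiniteField.roots_X_pow_card_sub_X (ZMod p)
    rwa [ZMod.card] at this
  have hdeg : (X ^ p - X : (ZMod p)[X]).natDegree = p :=
    FiniteField.X_pow_card_sub_X_natDegree_eq _ hp1
  have h0 : (X ^ p - X : (ZMod p)[X]) =
      (Multiset.map (fun a => X - C a) Finset.univ.val).prod := by
    conv_lhs => rw [← C_leadingCoeff_mul_prod_multiset_X_sub_C
      (p := (X ^ p - X : (ZMod p)[X])) (by rw [hroots, hdeg]; simp [ZMod.card])]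
    rw [hmonic.leadingCoeff, map_one, one_mul, hroots]
  have h1 : (X ^ p - X : (ZMod p)[X]) = ∏ a : ZMod p, (X - C a) := by
    rw [h0, Finset.prod_eq_multiset_prod]
  have h2 : (X ^ p - X : (AlgebraicClosure (ZMod p))[X]) =
      ∏ a : ZMod p, (X - C (phi p a)) := by
    have := congrArg (Polynomial.map (phi p)) h1
    simpa [Polynomial.map_prod] using this
  rw [h2]
  exact Fintype.prod_equiv (Equiv.neg (ZMod p)) _ _ (fun w => by simp [sub_neg_eq_add])

lemma eval_prod_lin (p : ℕ) [Fact p.Prime] (x : AlgebraicClosure (ZMod p)) :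
    ∏ w : ZMod p, (x + phi p w) = x ^ p - x := by
  have := congrArg (eval x) (prod_poly p)
  simpa [eval_prod] using this

lemma derivSumLin (p : ℕ) [Fact p.Prime] (x : AlgebraicClosure (ZMod p)) :
    ∑ w : ZMod p, ∏ w' ∈ Finset.univ.erase w, (x + phi p w') = -1 := by
  have h := congrArg (fun q => eval x (derivative q)) (prod_poly p)
  beta_reduce at h
  rw [derivative_sub, derivative_X_pow, derivative_X] at h
  have hR : eval x (derivative (∏ w : ZMod p, (X + C (phi p w)))) = (- 1 : AlgebraicClosure (ZMod p)) := by
    rw [h]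
    simp [CharP.cast_eq_zero (AlgebraicClosure (ZMod p)) p]
  rw [Finset.prod_eq_multiset_prod, derivative_prod] at hR
  simp only [derivative_add, derivative_X, derivative_C, add_zero, mul_one] at hR
  rw [← hR, show (Polynomial.eval x) = ⇑(evalRingHom x) from rfl, map_multiset_sum,
    Multiset.map_map, Finset.sum_eq_multiset_sum]
  congr 1
  refine Multiset.map_congr rfl fun w _ => ?_
  simp only [Function.comp_apply]
  rw [← Finset.erase_val, ← Finset.prod_eq_multiset_prod, map_prod]
  simp

lemma phi_pow_card (p : ℕ) [Fact p.Prime] (a : ZMod p) : (phi p a) ^ p = phi p a := by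
  rw [← map_pow, ZMod.pow_card]

lemma phi_pow_card_pow (p : ℕ) [Fact p.Prime] (a : ZMod p) (k : ℕ) :
    (phi p a) ^ p ^ k = phi p a := by
  rw [← map_pow, ZMod.pow_card_pow]

lemma sum_pow_eq_neg_one (p : ℕ) [Fact p.Prime] (x d : AlgebraicClosure (ZMod p))
    (hd : x ^ p - x = d) (hdne : d ≠ 0) :
    ∑ w : ZMod p, (x + phi p w) ^ (p - 1) = -1 := by
  have hp1 : 1 < p := (Fact.out : p.Prime).one_lt
  have hne : ∀ w : ZMod p, x + phi p w ≠ 0 := by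
    intro w hw
    apply hdne
    have hx : x = -phi p w := by linear_combination hw
    rw [← hd, hx, neg_pow, neg_one_pow_char (AlgebraicClosure (ZMod p)), phi_pow_card]
    ring
  have key : ∀ w : ZMod p,
      (x + phi p w) ^ (p - 1) = 1 + ∏ w' ∈ Finset.univ.erase w, (x + phi p w') := by
    intro w
    have hcancel := hne w
    apply mul_right_cancel₀ hcancel
    have h1 : (x + phi p w) ^ (p - 1) * (x + phi p w) = (x + phi p w) ^ p := by
      rw [← pow_succ]; congr 1; omega
    rw [h1, add_pow_char, phi_pow_card]
    have h2 : (1 + ∏ w' ∈ Finset.univ.erase w, (x + phi p w')) * (x + phi p w)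
        = (x + phi p w) + d := by
      rw [add_mul, one_mul, mul_comm,
        Finset.mul_prod_erase Finset.univ (fun w' => x + phi p w') (Finset.mem_univ w),
        eval_prod_lin, hd]
    rw [h2, ← hd]; ring
  simp_rw [key]
  rw [Finset.sum_add_distrib, derivSumLin]
  simp [ZMod.card, CharP.cast_eq_zero (AlgebraicClosure (ZMod p)) p]

lemma sum_range_zmod (p : ℕ) [Fact p.Prime] (g : ZMod p → AlgebraicClosure (ZMod p)) :
    ∑ v ∈ range p, g (v : ZMod p) = ∑ w : ZMod p, g w := by
  refine Finset.sum_nbij' (fun v => (v : ZMod p)) (fun w => w.val) (fun a _ => mem_univ _)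
    (fun w _ => mem_range.mpr (ZMod.val_lt w)) (fun a ha => ?_) (fun w _ => ?_) (fun a _ => rfl)
  · exact ZMod.val_cast_of_lt (mem_range.mp ha)
  · exact ZMod.natCast_val w |>.trans (ZMod.cast_id _ _)

lemma prod_range_zmod (p : ℕ) [Fact p.Prime] (g : ZMod p → AlgebraicClosure (ZMod p)) :
    ∏ v ∈ range p, g (v : ZMod p) = ∏ w : ZMod p, g w := by
  refine Finset.prod_nbij' (fun v => (v : ZMod p)) (fun w => w.val) (fun a _ => mem_univ _)
    (fun w _ => mem_range.mpr (ZMod.val_lt w)) (fun a ha => ?_) (fun w _ => ?_) (fun a _ => rfl)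
  · exact ZMod.val_cast_of_lt (mem_range.mp ha)
  · exact ZMod.natCast_val w |>.trans (ZMod.cast_id _ _)

lemma natCast_mul_phi (p : ℕ) [Fact p.Prime] (v : ℕ) (e : ZMod p) :
    (v : AlgebraicClosure (ZMod p)) * phi p e = phi p ((v : ZMod p) * e) := by
  rw [map_mul, map_natCast]

lemma prod_range_lin (p : ℕ) [Fact p.Prime] (x : AlgebraicClosure (ZMod p)) (e : ZMod p)
    (he : e ≠ 0) :
    ∏ v ∈ range p, (x + (v : AlgebraicClosure (ZMod p)) * phi p e) = x ^ p - x := by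
  calc ∏ v ∈ range p, (x + (v : AlgebraicClosure (ZMod p)) * phi p e)
      = ∏ v ∈ range p, (x + phi p ((v : ZMod p) * e)) := by
        refine Finset.prod_congr rfl fun v _ => by rw [natCast_mul_phi]
    _ = ∏ w : ZMod p, (x + phi p (w * e)) := prod_range_zmod p (fun w => x + phi p (w * e))
    _ = ∏ w : ZMod p, (x + phi p w) :=
        Fintype.prod_equiv (Equiv.mulRight₀ e he) _ _ (fun w => rfl)
    _ = x ^ p - x := eval_prod_lin p x

lemma sum_range_lin (p : ℕ) [Fact p.Prime] (x d : AlgebraicClosure (ZMod p))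
    (hd : x ^ p - x = d) (hdne : d ≠ 0) (e : ZMod p) (he : e ≠ 0) :
    ∑ v ∈ range p, (x + (v : AlgebraicClosure (ZMod p)) * phi p e) ^ (p - 1) = -1 := by
  calc ∑ v ∈ range p, (x + (v : AlgebraicClosure (ZMod p)) * phi p e) ^ (p - 1)
      = ∑ v ∈ range p, (x + phi p ((v : ZMod p) * e)) ^ (p - 1) := by
        refine Finset.sum_congr rfl fun v _ => by rw [natCast_mul_phi]
    _ = ∑ w : ZMod p, (x + phi p (w * e)) ^ (p - 1) :=
        sum_range_zmod p (fun w => (x + phi p (w * e)) ^ (p - 1))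
    _ = ∑ w : ZMod p, (x + phi p w) ^ (p - 1) :=
        Fintype.sum_equiv (Equiv.mulRight₀ e he) _ _ (fun w => rfl)
    _ = -1 := sum_pow_eq_neg_one p x d hd hdne

lemma sum_pow_p (p : ℕ) [Fact p.Prime] (f : ℕ → AlgebraicClosure (ZMod p)) (s : Finset ℕ) :
    (∑ i ∈ s, f i) ^ p = ∑ i ∈ s, (f i) ^ p := by
  simp only [← frobenius_def, map_sum]

lemma pow_pow_eq (p : ℕ) [Fact p.Prime] (y b : AlgebraicClosure (ZMod p))
    (h : y ^ p = y + b) (k : ℕ) :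
    y ^ p ^ k = y + ∑ m ∈ range k, b ^ p ^ m := by
  induction k with
  | zero => simp
  | succ k ih =>
    have h1 : y ^ p ^ (k + 1) = (y ^ p ^ k) ^ p := by rw [← pow_mul, pow_succ]
    rw [h1, ih, add_pow_char, h, sum_pow_p]
    rw [Finset.sum_range_succ' (fun m => b ^ p ^ m) k]
    have h2 : ∀ m, (b ^ p ^ m) ^ p = b ^ p ^ (m + 1) := fun m => by
      rw [← pow_mul, ← pow_succ]
    simp only [h2, pow_zero, pow_one]
    ring

lemma periodic_shift (p : ℕ) [Fact p.Prime] (f : ℕ → AlgebraicClosure (ZMod p)) (n : ℕ)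
    (hf : ∀ m, f (m + n) = f m) : ∀ v m, f (n * v + m) = f m := by
  intro v
  induction v with
  | zero => simp
  | succ v ih =>
    intro m
    have : n * (v + 1) + m = (n * v + m) + n := by ring
    rw [this, hf, ih]

lemma periodic_sum (p : ℕ) [Fact p.Prime] (f : ℕ → AlgebraicClosure (ZMod p)) (n : ℕ)
    (hf : ∀ m, f (m + n) = f m) (v : ℕ) :
    ∑ m ∈ range (n * v), f m = (v : AlgebraicClosure (ZMod p)) * ∑ m ∈ range n, f m := by
  induction v with
  | zero => simp
  | succ v ih =>
    have h3 : n * (v + 1) = n * v + n := by ring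
    rw [h3, Finset.sum_range_add, ih]
    have h4 : ∀ m, f (n * v + m) = f m := fun m => periodic_shift p f n hf v m
    rw [Finset.sum_congr rfl fun m _ => h4 m]
    push_cast
    ring

lemma sum_range_mul (p : ℕ) [Fact p.Prime] (g : ℕ → AlgebraicClosure (ZMod p)) (n k : ℕ) :
    ∑ m ∈ range (n * k), g m = ∑ v ∈ range k, ∑ u ∈ range n, g (n * v + u) := by
  induction k with
  | zero => simp
  | succ k ih =>
    have h3 : n * (k + 1) = n * k + n := by ring
    rw [h3, Finset.sum_range_add, ih, Finset.sum_range_succ]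

lemma neg_one_pow_ne_zero' (p : ℕ) [Fact p.Prime] (i : ℕ) : ((-1 : ZMod p)) ^ i ≠ 0 :=
  pow_ne_zero _ (neg_ne_zero.mpr one_ne_zero)

lemma phi_neg_one_pow (p : ℕ) [Fact p.Prime] (i : ℕ) :
    phi p ((-1 : ZMod p) ^ i) = (-1 : AlgebraicClosure (ZMod p)) ^ i := by
  rw [map_pow, map_neg, map_one]

theorem key_trace (p : ℕ) [Fact p.Prime] (c : ℕ → AlgebraicClosure (ZMod p))
    (hc : ∀ i, c i ^ p - c i = (∏ j ∈ Finset.range i, c j) ^ (p - 1)) :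
    ∀ i, ∑ m ∈ range (p ^ i), ((∏ j ∈ Finset.range i, c j) ^ (p - 1)) ^ p ^ m
      = (-1 : AlgebraicClosure (ZMod p)) ^ i := by
  intro i
  induction i with
  | zero => simp
  | succ i ih =>
    set B : AlgebraicClosure (ZMod p) := (∏ j ∈ Finset.range i, c j) ^ (p - 1) with hB
    have hcB : c i ^ p = c i + B := by
      have := hc i; linear_combination this
    have hBne : B ≠ 0 := by
      intro h
      rw [h] at ih
      have hz : ∀ m ∈ range (p ^ i), (0 : AlgebraicClosure (ZMod p)) ^ p ^ m = 0 := fun m _ =>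
        zero_pow (pow_ne_zero _ (Fact.out : p.Prime).ne_zero)
      rw [Finset.sum_congr rfl hz, Finset.sum_const, smul_zero] at ih
      exact pow_ne_zero _ (neg_ne_zero.mpr one_ne_zero) ih.symm
    have hsub : ∀ k : ℕ, B ^ p ^ k = (c i ^ p ^ k) ^ p - c i ^ p ^ k := by
      intro k
      have : B = c i ^ p - c i := by linear_combination (hc i).symm
      rw [this, sub_pow_char_pow, pow_right_comm]
    have hci_frob : c i ^ p ^ p ^ i = c i + (-1 : AlgebraicClosure (ZMod p)) ^ i := by
      rw [pow_pow_eq p (c i) B hcB (p ^ i), ih]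
    have hfix : B ^ p ^ p ^ i = B := by
      rw [hsub, hci_frob, add_pow_char, ← pow_right_comm,
        neg_one_pow_char (AlgebraicClosure (ZMod p))]
      rw [hcB]
      ring
    have hperB : ∀ m, B ^ p ^ (m + p ^ i) = B ^ p ^ m := by
      intro m
      rw [pow_add, mul_comm, pow_mul, hfix]
    have hperiodic : ∀ v m, B ^ p ^ (p ^ i * v + m) = B ^ p ^ m :=
      periodic_shift p (fun m => B ^ p ^ m) (p ^ i) hperB
    have hT : ∀ v m, (∑ r ∈ range (p ^ i * v + m), B ^ p ^ r)
        = (v : AlgebraicClosure (ZMod p)) * (-1 : AlgebraicClosure (ZMod p)) ^ i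
          + ∑ r ∈ range m, B ^ p ^ r := by
      intro v m
      rw [Finset.sum_range_add, periodic_sum p (fun m => B ^ p ^ m) (p ^ i) hperB, ih]
      congr 1
      exact Finset.sum_congr rfl fun r _ => hperiodic v r
    have hx : ∀ m, c i ^ p ^ m = c i + ∑ r ∈ range m, B ^ p ^ r :=
      pow_pow_eq p (c i) B hcB
    have hA : (∏ j ∈ Finset.range (i + 1), c j) ^ (p - 1) = B * c i ^ (p - 1) := by
      rw [Finset.prod_range_succ, mul_pow]
    rw [hA, pow_succ]
    rw [sum_range_mul]
    have hterm : ∀ v u, (B * c i ^ (p - 1)) ^ p ^ (p ^ i * v + u)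
        = B ^ p ^ u * ((c i ^ p ^ u)
          + (v : AlgebraicClosure (ZMod p)) * ((-1 : AlgebraicClosure (ZMod p)) ^ i)) ^ (p - 1) := by
      intro v u
      rw [mul_pow, hperiodic v u, pow_right_comm (c i) (p - 1) (p ^ (p ^ i * v + u)),
        hx (p ^ i * v + u), hT v u, hx u]
      ring
    rw [Finset.sum_congr rfl fun v _ => Finset.sum_congr rfl fun u _ => hterm v u]
    rw [Finset.sum_comm]
    have hinner : ∀ u, ∑ v ∈ range p, B ^ p ^ u * ((c i ^ p ^ u)
        + (v : AlgebraicClosure (ZMod p)) * ((-1 : AlgebraicClosure (ZMod p)) ^ i)) ^ (p - 1)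
        = -(B ^ p ^ u) := by
      intro u
      rw [← Finset.mul_sum]
      have he : ((-1 : ZMod p)) ^ i ≠ 0 := neg_one_pow_ne_zero' p i
      have hd : (c i ^ p ^ u) ^ p - c i ^ p ^ u = B ^ p ^ u := (hsub u).symm
      have hdne : B ^ p ^ u ≠ 0 := pow_ne_zero _ hBne
      have h5 := sum_range_lin p (c i ^ p ^ u) (B ^ p ^ u) hd hdne ((-1 : ZMod p) ^ i) he
      rw [phi_neg_one_pow] at h5
      rw [h5]
      ring
    rw [Finset.sum_congr rfl fun u _ => hinner u, Finset.sum_neg_distrib, ih, pow_succ]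
    ring

theorem c_pow_N_eq_a_pred (p : ℕ) [Fact p.Prime]
    (c : ℕ → AlgebraicClosure (ZMod p))
    (hc : ∀ i, c i ^ p - c i = (∏ j ∈ Finset.range i, c j) ^ (p - 1))
    (i : ℕ) :
    c i ^ (∑ j ∈ Finset.range p, (p ^ p ^ i) ^ j) =
      (∏ j ∈ Finset.range i, c j) ^ (p - 1) := by
  set e : ZMod p := (-1 : ZMod p) ^ i with he_def
  have he : e ≠ 0 := pow_ne_zero _ (neg_ne_zero.mpr one_ne_zero)
  have hs : phi p e = (-1 : AlgebraicClosure (ZMod p)) ^ i := phi_neg_one_pow p i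
  have hcB : c i ^ p = c i + (∏ j ∈ Finset.range i, c j) ^ (p - 1) := by
    linear_combination hc i
  have h1 : c i ^ p ^ p ^ i = c i + phi p e := by
    rw [pow_pow_eq p (c i) _ hcB (p ^ i), key_trace p c hc i, hs]
  have h2 : ∀ j : ℕ, c i ^ (p ^ p ^ i) ^ j
      = c i + (j : AlgebraicClosure (ZMod p)) * phi p e := by
    intro j
    induction j with
    | zero => simp
    | succ j ih =>
      have h3 : c i ^ (p ^ p ^ i) ^ (j + 1) = (c i ^ (p ^ p ^ i) ^ j) ^ p ^ p ^ i := by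
        rw [pow_succ, pow_mul]
      rw [h3, ih, add_pow_char_pow, h1]
      have hj : ((j : AlgebraicClosure (ZMod p)) * phi p e) ^ p ^ p ^ i
          = (j : AlgebraicClosure (ZMod p)) * phi p e := by
        rw [mul_pow, ← map_natCast (phi p) j, phi_pow_card_pow, phi_pow_card_pow]
      rw [hj]
      push_cast
      ring
  rw [← Finset.prod_pow_eq_pow_sum]
  calc ∏ j ∈ Finset.range p, c i ^ (p ^ p ^ i) ^ j
      = ∏ j ∈ Finset.range p, (c i + (j : AlgebraicClosure (ZMod p)) * phi p e) :=
        Finset.prod_congr rfl fun j _ => h2 j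
    _ = c i ^ p - c i := prod_range_lin p (c i) e he
    _ = (∏ j ∈ Finset.range i, c j) ^ (p - 1) := hc i
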